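/- Let d ≥ 2 and let B ⊆ S^{d-1} be a nonempty open geodesic ball. Then there exist an orthogonal projection P_B on L²(S^{d-1}) localized on B and a constant c > 0 such that for every f ∈ L²(S^{d-1}) the map SO(d) → L²(S^{d-1}), b ↦ (T_b ∘ P_B ∘ T_{b^{-1}}) f, is continuous, and its Bochner integral satisfies ∫_{SO(d)} (T_b ∘ P_B ∘ T_{b^{-1}}) f dμ(b) = c · f in L²(S^{d-1}). -/

import Mathlib

open MeasureTheory Matrix Metric
open scoped RealInnerProductSpace Pointwise
set_option maxHeartbeats 8000000
set_option synthInstance.maxHeartbeats 400000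
noncomputable section

/-- `ℝ^d` as Euclidean space. -/
abbrev Eucl (d : ℕ) : Type := EuclideanSpace ℝ (Fin d)

/-- The unit sphere `S^{d-1} ⊆ ℝ^d`. -/
abbrev Sph (d : ℕ) := Metric.sphere (0 : Eucl d) 1

instance (d : ℕ) : MeasurableSpace (Matrix (Fin d) (Fin d) ℝ) :=
  inferInstanceAs (MeasurableSpace (Fin d → Fin d → ℝ))

/-- The special orthogonal group `SO(d)` as a subgroup of the orthogonal group. -/
def SOsub (d : ℕ) : Subgroup ↥(Matrix.orthogonalGroup (Fin d) ℝ) where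
  carrier := {A | Matrix.det (A : Matrix (Fin d) (Fin d) ℝ) = 1}
  one_mem' := by simp
  mul_mem' := by
    intro a b ha hb
    simp only [Set.mem_setOf_eq] at *
    rw [Matrix.UnitaryGroup.mul_val, Matrix.det_mul, ha, hb, mul_one]
  inv_mem' := by
    intro a ha
    simp only [Set.mem_setOf_eq] at *
    rw [Matrix.UnitaryGroup.inv_val, Matrix.star_eq_conjTranspose,
      show ((a : Matrix (Fin d) (Fin d) ℝ))ᴴ = (a : Matrix (Fin d) (Fin d) ℝ)ᵀ from rfl,
      Matrix.det_transpose, ha]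

/-- The special orthogonal group `SO(d)`. -/
abbrev SOg (d : ℕ) := ↥(SOsub d)

/-- The matrix of an element of `SO(d)`. -/
abbrev SOg.mat {d : ℕ} (b : SOg d) : Matrix (Fin d) (Fin d) ℝ :=
  ((b : ↥(Matrix.orthogonalGroup (Fin d) ℝ)) : Matrix (Fin d) (Fin d) ℝ)

lemma SOg.matT_mul {d : ℕ} (b : SOg d) : b.matᵀ * b.mat = 1 := by
  have h := (b : ↥(Matrix.orthogonalGroup (Fin d) ℝ)).2.1
  simpa [Matrix.star_eq_conjTranspose] using h

lemma mulVec_mem_sphere {d : ℕ} (b : SOg d) (x : Sph d) :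
    (WithLp.equiv 2 (Fin d → ℝ)).symm (b.mat.mulVec ((WithLp.equiv 2 (Fin d → ℝ)) x.1)) ∈
      Metric.sphere (0 : Eucl d) 1 := by
  have hx : ‖x.1‖ = 1 := by simpa using x.2
  rw [mem_sphere_iff_norm, sub_zero]
  have key : ∀ w : Eucl d,
      ‖w‖ ^ 2 = (WithLp.equiv 2 (Fin d → ℝ)) w ⬝ᵥ (WithLp.equiv 2 (Fin d → ℝ)) w := by
    intro w
    rw [EuclideanSpace.norm_eq, Real.sq_sqrt (by positivity)]
    simp [dotProduct, sq_abs, pow_two]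
  set v : Fin d → ℝ := (WithLp.equiv 2 (Fin d → ℝ)) x.1 with hv
  have hdot : (b.mat.mulVec v) ⬝ᵥ (b.mat.mulVec v) = v ⬝ᵥ v := by
    rw [Matrix.dotProduct_mulVec, ← Matrix.mulVec_transpose, Matrix.mulVec_mulVec, SOg.matT_mul,
      Matrix.one_mulVec]
  have h1 : ‖(WithLp.equiv 2 (Fin d → ℝ)).symm (b.mat.mulVec v)‖ ^ 2 = (1 : ℝ) := by
    rw [key, Equiv.apply_symm_apply, hdot, ← key, hx, one_pow]
  nlinarith [norm_nonneg ((WithLp.equiv 2 (Fin d → ℝ)).symm (b.mat.mulVec v))]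

/-- The rotation action of `SO(d)` on the sphere `S^{d-1}`. -/
def rot {d : ℕ} (b : SOg d) (x : Sph d) : Sph d :=
  ⟨(WithLp.equiv 2 (Fin d → ℝ)).symm (b.mat.mulVec ((WithLp.equiv 2 (Fin d → ℝ)) x.1)),
    mulVec_mem_sphere b x⟩

lemma continuous_rot {d : ℕ} (b : SOg d) : Continuous (rot b) := by
  apply Continuous.subtype_mk
  refine (PiLp.continuous_toLp (p := 2) (β := fun _ : Fin d => ℝ)).comp ?_
  have : Continuous fun v : Fin d → ℝ => b.mat.mulVec v :=
    b.mat.mulVecLin.continuous_of_finiteDimensional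
  exact this.comp ((PiLp.continuous_ofLp (p := 2) (β := fun _ : Fin d => ℝ)).comp continuous_subtype_val)

/-- Rotation as a continuous self-map of the sphere. -/
def rotCM {d : ℕ} (b : SOg d) : C(Sph d, Sph d) := ⟨rot b, continuous_rot b⟩

/-- The rotation operator `T_b f = f ∘ b⁻¹` on continuous functions on the sphere. -/
def Trot {d : ℕ} (b : SOg d) (f : C(Sph d, ℝ)) : C(Sph d, ℝ) := f.comp (rotCM b⁻¹)

/-- The rotation operator `T_b` on `L²` of the sphere. -/
def TrotL2 {d : ℕ} (σ : Measure (Sph d)) (hσ : ∀ b : SOg d, MeasurePreserving (rot b) σ σ)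
    (b : SOg d) : Lp ℝ 2 σ →L[ℝ] Lp ℝ 2 σ :=
  (Lp.compMeasurePreservingₗᵢ ℝ (rot b⁻¹) (hσ b⁻¹)).toContinuousLinearMap


namespace SphRot
variable {d : ℕ}

lemma mat_mul (a b : SOg d) : (a * b).mat = a.mat * b.mat := rfl

lemma mat_one : (1 : SOg d).mat = 1 := rfl

lemma mat_inv (b : SOg d) : (b⁻¹).mat = b.matᵀ := rfl

lemma rot_mul (a b : SOg d) (x : Sph d) : rot (a * b) x = rot a (rot b x) := by
  apply Subtype.ext
  simp [rot, mat_mul, ← Matrix.mulVec_mulVec]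

lemma rot_one (x : Sph d) : rot (1 : SOg d) x = x := by
  apply Subtype.ext
  simp [rot, mat_one]

lemma rot_rot_inv (b : SOg d) (x : Sph d) : rot b (rot b⁻¹ x) = x := by
  rw [← rot_mul, mul_inv_cancel, rot_one]

lemma rot_inv_rot (b : SOg d) (x : Sph d) : rot b⁻¹ (rot b x) = x := by
  rw [← rot_mul, inv_mul_cancel, rot_one]

lemma norm_mulVec (b : SOg d) (v : Eucl d) :
    ‖(WithLp.equiv 2 (Fin d → ℝ)).symm (b.mat.mulVec ((WithLp.equiv 2 (Fin d → ℝ)) v))‖ = ‖v‖ := by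
  have key : ∀ w : Eucl d,
      ‖w‖ ^ 2 = (WithLp.equiv 2 (Fin d → ℝ)) w ⬝ᵥ (WithLp.equiv 2 (Fin d → ℝ)) w := by
    intro w
    rw [EuclideanSpace.norm_eq, Real.sq_sqrt (by positivity)]
    simp [dotProduct, sq_abs, pow_two]
  set u : Fin d → ℝ := (WithLp.equiv 2 (Fin d → ℝ)) v with hu
  have hdot : (b.mat.mulVec u) ⬝ᵥ (b.mat.mulVec u) = u ⬝ᵥ u := by
    rw [Matrix.dotProduct_mulVec, ← Matrix.mulVec_transpose, Matrix.mulVec_mulVec, SOg.matT_mul,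
      Matrix.one_mulVec]
  have h1 : ‖(WithLp.equiv 2 (Fin d → ℝ)).symm (b.mat.mulVec u)‖ ^ 2 = ‖v‖ ^ 2 := by
    rw [key, Equiv.apply_symm_apply, hdot, key]
  have h2 := norm_nonneg ((WithLp.equiv 2 (Fin d → ℝ)).symm (b.mat.mulVec u))
  nlinarith [norm_nonneg v]

lemma dist_rot (b : SOg d) (x y : Sph d) : dist (rot b x) (rot b y) = dist x y := by
  have : ∀ z w : Sph d, dist z w = ‖z.1 - w.1‖ := by
    intro z w
    rw [Subtype.dist_eq, dist_eq_norm]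
  rw [this, this, rot, rot]
  have hsub : (WithLp.equiv 2 (Fin d → ℝ)).symm (b.mat.mulVec ((WithLp.equiv 2 (Fin d → ℝ)) x.1))
      - (WithLp.equiv 2 (Fin d → ℝ)).symm (b.mat.mulVec ((WithLp.equiv 2 (Fin d → ℝ)) y.1))
      = (WithLp.equiv 2 (Fin d → ℝ)).symm
        (b.mat.mulVec ((WithLp.equiv 2 (Fin d → ℝ)) (x.1 - y.1))) := by
    apply (WithLp.equiv 2 (Fin d → ℝ)).injective
    simp [Matrix.mulVec_sub]
  rw [hsub, norm_mulVec]


lemma exists_rot_single (hd : 2 ≤ d) (x : Sph d) :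
    ∃ g : SOg d, rot g ⟨EuclideanSpace.single (⟨0, by omega⟩ : Fin d) 1, by
      simp [mem_sphere_iff_norm]⟩ = x := by
  classical
  set i0 : Fin d := ⟨0, by omega⟩ with hi0
  set i1 : Fin d := ⟨1, by omega⟩ with hi1
  have hi : i0 ≠ i1 := by simp [hi0, hi1, Fin.ext_iff]
  have hx : ‖x.1‖ = 1 := by simpa using x.2
  have horth : Orthonormal ℝ (({i0} : Set (Fin d)).restrict (fun _ : Fin d => x.1)) := by
    rw [orthonormal_iff_ite]
    rintro ⟨i, hi'⟩ ⟨j, hj'⟩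
    simp only [Set.mem_singleton_iff] at hi' hj'
    subst hi'; subst hj'
    have h1 : ⟪x.1, x.1⟫ = 1 := by
      rw [real_inner_self_eq_norm_sq, hx]; norm_num
    simp [Set.restrict_apply, hx]
    exact Or.inl hx
  obtain ⟨bb, hbb⟩ := Orthonormal.exists_orthonormalBasis_extension_of_card_eq
    (ι := Fin d) (v := fun _ : Fin d => x.1) (s := {i0})
    (by simp [finrank_euclideanSpace_fin]) horth
  have hbb0 : bb i0 = x.1 := hbb i0 (by simp)
  set A : Matrix (Fin d) (Fin d) ℝ := Matrix.of (fun i j => bb j i) with hA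
  have hAorth : Aᵀ * A = 1 := by
    ext j k
    have h1 := (orthonormal_iff_ite.mp bb.orthonormal) j k
    rw [PiLp.inner_apply] at h1
    simp only [Matrix.mul_apply, Matrix.transpose_apply, Matrix.one_apply, hA, Matrix.of_apply]
    simpa [RCLike.inner_apply, mul_comm] using h1
  have hAdet : A.det * A.det = 1 := by
    have h2 := congrArg Matrix.det hAorth
    rwa [Matrix.det_mul, Matrix.det_transpose, Matrix.det_one] at h2
  set s : ℝ := A.det with hs
  set D : Matrix (Fin d) (Fin d) ℝ := Matrix.diagonal (fun k => if k = i1 then s else 1) with hD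
  have hDD : D * D = 1 := by
    rw [hD, Matrix.diagonal_mul_diagonal]
    have he : (fun k => (if k = i1 then s else 1) * (if k = i1 then s else 1))
        = fun _ : Fin d => (1:ℝ) := by
      funext k; by_cases hk : k = i1 <;> simp [hk, hAdet]
    rw [he, Matrix.diagonal_one]
  have hDdet : D.det = s := by
    rw [hD, Matrix.det_diagonal]
    rw [Finset.prod_eq_single i1 (fun b _ hb => by simp [hb])
      (fun h => absurd (Finset.mem_univ i1) h)]
    simp
  set B : Matrix (Fin d) (Fin d) ℝ := A * D with hB
  have hBorth : Bᵀ * B = 1 := by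
    have hDT : Dᵀ = D := Matrix.diagonal_transpose _
    rw [hB, Matrix.transpose_mul, hDT, Matrix.mul_assoc, ← Matrix.mul_assoc Aᵀ A D, hAorth,
      Matrix.one_mul, hDD]
  have hBdet : B.det = 1 := by
    rw [hB, Matrix.det_mul, hDdet, ← hs, hAdet]
  have hmem : B ∈ Matrix.orthogonalGroup (Fin d) ℝ := by
    rw [Matrix.mem_orthogonalGroup_iff]
    exact mul_eq_one_comm.mp hBorth
  refine ⟨⟨⟨B, hmem⟩, hBdet⟩, ?_⟩
  apply Subtype.ext
  show (WithLp.equiv 2 (Fin d → ℝ)).symm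
    (B.mulVec ((WithLp.equiv 2 (Fin d → ℝ)) (EuclideanSpace.single i0 1))) = x.1
  rw [show (WithLp.equiv 2 (Fin d → ℝ)) (EuclideanSpace.single i0 1) = Pi.single i0 1 from
    EuclideanSpace.ofLp_single i0 1, Matrix.mulVec_single]
  apply (WithLp.equiv 2 (Fin d → ℝ)).injective
  rw [Equiv.apply_symm_apply]
  funext i
  have hBcol : B i i0 = x.1 i := by
    rw [hB, Matrix.mul_apply]
    rw [Finset.sum_eq_single i0]
    · rw [hD, Matrix.diagonal_apply_eq, if_neg hi]
      simp [hA, hbb0]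
    · intro k _ hk
      rw [hD, Matrix.diagonal_apply_ne _ hk, mul_zero]
    · simp
  simp [hBcol]

lemma exists_rot_eq (hd : 2 ≤ d) (x y : Sph d) : ∃ g : SOg d, rot g x = y := by
  obtain ⟨gx, hgx⟩ := exists_rot_single hd x
  obtain ⟨gy, hgy⟩ := exists_rot_single hd y
  exact ⟨gy * gx⁻¹, by rw [rot_mul, ← hgx, rot_inv_rot, hgy]⟩


instance instSecCountMatrix (d : ℕ) : SecondCountableTopology (Matrix (Fin d) (Fin d) ℝ) :=
  inferInstanceAs (SecondCountableTopology (Fin d → Fin d → ℝ))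

instance instSecCountOG (d : ℕ) :
    SecondCountableTopology ↥(Matrix.orthogonalGroup (Fin d) ℝ) :=
  TopologicalSpace.secondCountableTopology_induced _ _
    (Subtype.val : ↥(Matrix.orthogonalGroup (Fin d) ℝ) → Matrix (Fin d) (Fin d) ℝ)

instance instSecCountSOg (d : ℕ) : SecondCountableTopology (SOg d) :=
  TopologicalSpace.secondCountableTopology_induced _ _
    (Subtype.val : SOg d → ↥(Matrix.orthogonalGroup (Fin d) ℝ))

instance instBorelMatrix (d : ℕ) : BorelSpace (Matrix (Fin d) (Fin d) ℝ) :=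
  inferInstanceAs (BorelSpace (Fin d → Fin d → ℝ))

instance instBorelOG (d : ℕ) : BorelSpace ↥(Matrix.orthogonalGroup (Fin d) ℝ) :=
  inferInstanceAs (BorelSpace (SetLike.coe (Matrix.orthogonalGroup (Fin d) ℝ)))

instance instBorelSOg (d : ℕ) : BorelSpace (SOg d) :=
  inferInstanceAs (BorelSpace (SetLike.coe (SOsub d)))

instance instOMSSOgProd (d : ℕ) : OpensMeasurableSpace (SOg d × Sph d) :=
  inferInstance

lemma continuous_mat : Continuous (fun b : SOg d => b.mat) :=
  continuous_subtype_val.comp continuous_subtype_val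

lemma continuous_mulVec_pair :
    Continuous fun p : (Matrix (Fin d) (Fin d) ℝ) × (Fin d → ℝ) => p.1 *ᵥ p.2 := by
  apply continuous_pi
  intro i
  simp only [Matrix.mulVec, dotProduct]
  apply continuous_finset_sum
  intro j _
  exact ((continuous_apply j).comp ((continuous_apply i).comp continuous_fst)).mul
    ((continuous_apply j).comp continuous_snd)

lemma continuous_rot_pair :
    Continuous fun p : SOg d × Sph d => rot p.1⁻¹ p.2 := by
  apply Continuous.subtype_mk
  refine (PiLp.continuous_toLp (p := 2) (β := fun _ : Fin d => ℝ)).comp ?_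
  show Continuous fun p : SOg d × Sph d =>
    (p.1.matᵀ) *ᵥ ((WithLp.equiv 2 (Fin d → ℝ)) p.2.1)
  exact continuous_mulVec_pair.comp
    (((continuous_mat.comp continuous_fst).matrix_transpose).prodMk
      ((PiLp.continuous_ofLp (p := 2) (β := fun _ : Fin d => ℝ)).comp
        (continuous_subtype_val.comp continuous_snd)))

lemma continuous_inv_SOg : Continuous (fun b : SOg d => b⁻¹) := by
  apply continuous_induced_rng.mpr
  apply continuous_induced_rng.mpr
  show Continuous fun b : SOg d => b.matᵀ
  exact continuous_mat.matrix_transpose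

variable (σ : Measure (Sph d)) [IsProbabilityMeasure σ]
  (hσ : ∀ b : SOg d, MeasurePreserving (rot b) σ σ)

lemma toLp_Trot (b : SOg d) (h : C(Sph d, ℝ)) :
    TrotL2 σ hσ b (ContinuousMap.toLp 2 σ ℝ h) = ContinuousMap.toLp 2 σ ℝ (Trot b h) := by
  apply MeasureTheory.Lp.ext
  refine (Lp.coeFn_compMeasurePreserving _ (hσ b⁻¹)).trans ?_
  refine ((hσ b⁻¹).quasiMeasurePreserving.ae_eq_comp
    (ContinuousMap.coeFn_toLp σ h)).trans ?_
  exact (ContinuousMap.coeFn_toLp σ (Trot b h)).symm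

lemma continuous_TrotL2_toLp (h : C(Sph d, ℝ)) :
    Continuous fun b : SOg d => TrotL2 σ hσ b (ContinuousMap.toLp 2 σ ℝ h) := by
  have heq : (fun b : SOg d => TrotL2 σ hσ b (ContinuousMap.toLp 2 σ ℝ h))
      = fun b : SOg d => ContinuousMap.toLp 2 σ ℝ (Trot b h) := by
    funext b; exact toLp_Trot σ hσ b h
  rw [heq]
  have h1 : Continuous fun b : SOg d => rotCM b⁻¹ :=
    ContinuousMap.continuous_of_continuous_uncurry _ continuous_rot_pair
  exact (ContinuousMap.toLp 2 σ ℝ).continuous.comp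
    ((ContinuousMap.continuous_postcomp h).comp h1)

lemma norm_TrotL2 (b : SOg d) (g : Lp ℝ 2 σ) : ‖TrotL2 σ hσ b g‖ = ‖g‖ :=
  (Lp.compMeasurePreservingₗᵢ ℝ (rot b⁻¹) (hσ b⁻¹)).norm_map g

lemma dist_TrotL2 (b : SOg d) (u v : Lp ℝ 2 σ) :
    dist (TrotL2 σ hσ b u) (TrotL2 σ hσ b v) = dist u v := by
  rw [dist_eq_norm, ← map_sub, norm_TrotL2, ← dist_eq_norm]

lemma continuous_TrotL2_apply (g : Lp ℝ 2 σ) :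
    Continuous fun b : SOg d => TrotL2 σ hσ b g := by
  rw [continuous_iff_continuousAt]
  intro b₀
  unfold ContinuousAt
  rw [Metric.tendsto_nhds]
  intro ε hε
  obtain ⟨h, hh⟩ := (ContinuousMap.toLp_denseRange ℝ σ ℝ (p := 2)
    (by norm_num)).exists_dist_lt g (by positivity : (0:ℝ) < ε/3)
  set u : Lp ℝ 2 σ := ContinuousMap.toLp 2 σ ℝ h with hu
  have hc := (continuous_TrotL2_toLp σ hσ h).continuousAt (x := b₀)
  rw [ContinuousAt, Metric.tendsto_nhds] at hc
  filter_upwards [hc (ε/3) (by positivity)] with b hb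
  have t1 : dist (TrotL2 σ hσ b g) (TrotL2 σ hσ b u) = dist g u := dist_TrotL2 σ hσ b g u
  have t3 : dist (TrotL2 σ hσ b₀ u) (TrotL2 σ hσ b₀ g) = dist u g := dist_TrotL2 σ hσ b₀ u g
  calc dist (TrotL2 σ hσ b g) (TrotL2 σ hσ b₀ g)
      ≤ dist (TrotL2 σ hσ b g) (TrotL2 σ hσ b u)
        + dist (TrotL2 σ hσ b u) (TrotL2 σ hσ b₀ u)
        + dist (TrotL2 σ hσ b₀ u) (TrotL2 σ hσ b₀ g) := dist_triangle4 _ _ _ _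
    _ < ε/3 + ε/3 + ε/3 := by
        rw [t1, t3, dist_comm u g]
        linarith [hh, hb]
    _ = ε := by ring


variable {K : Set (Sph d)}

lemma memP (hK : MeasurableSet K) (f : Lp ℝ 2 σ) : MemLp (K.indicator ⇑f) 2 σ :=
  (Lp.memLp f).indicator hK

/-- Multiplication by the indicator of `K` as an operator on `L²`. -/
def Pind (hK : MeasurableSet K) : Lp ℝ 2 σ →L[ℝ] Lp ℝ 2 σ :=
  LinearMap.mkContinuous
    { toFun := fun f => (memP σ hK f).toLp _
      map_add' := by
        intro f g
        apply MeasureTheory.Lp.ext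
        refine ((memP σ hK (f + g)).coeFn_toLp).trans ?_
        refine (Filter.EventuallyEq.trans ?_
          ((Lp.coeFn_add ((memP σ hK f).toLp _) ((memP σ hK g).toLp _)).symm))
        have h1 : K.indicator ⇑(f + g) =ᵐ[σ] K.indicator (⇑f + ⇑g) :=
          Filter.EventuallyEq.indicator (Lp.coeFn_add f g)
        refine h1.trans ?_
        have h2 : K.indicator (⇑f + ⇑g) = K.indicator ⇑f + K.indicator ⇑g := by
          funext x
          by_cases hx : x ∈ K <;>
            simp [Set.indicator_of_mem, Set.indicator_of_notMem, hx]
        rw [h2]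
        exact ((memP σ hK f).coeFn_toLp.symm).add ((memP σ hK g).coeFn_toLp.symm)
      map_smul' := by
        intro c f
        apply MeasureTheory.Lp.ext
        refine ((memP σ hK (c • f)).coeFn_toLp).trans ?_
        refine (Filter.EventuallyEq.trans ?_
          ((Lp.coeFn_smul c ((memP σ hK f).toLp _)).symm))
        have h1 : K.indicator ⇑(c • f) =ᵐ[σ] K.indicator (c • ⇑f) :=
          Filter.EventuallyEq.indicator (Lp.coeFn_smul c f)
        refine h1.trans ?_
        have h2 : K.indicator (c • ⇑f) = c • K.indicator ⇑f := by
          funext x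
          by_cases hx : x ∈ K <;>
            simp [Set.indicator_of_mem, Set.indicator_of_notMem, hx]
        rw [h2]
        exact ((memP σ hK f).coeFn_toLp.symm).const_smul c }
    1
    (by
      intro f
      rw [one_mul]
      show ‖(memP σ hK f).toLp _‖ ≤ ‖f‖
      rw [Lp.norm_toLp, Lp.norm_def]
      apply ENNReal.toReal_mono (Lp.eLpNorm_ne_top f)
      apply eLpNorm_mono_ae
      exact Filter.Eventually.of_forall fun x => norm_indicator_le_norm_self ⇑f x)

lemma coeFn_Pind (hK : MeasurableSet K) (f : Lp ℝ 2 σ) :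
    Pind σ hK f =ᵐ[σ] K.indicator ⇑f :=
  (memP σ hK f).coeFn_toLp

lemma norm_Pind_le (hK : MeasurableSet K) (f : Lp ℝ 2 σ) : ‖Pind σ hK f‖ ≤ ‖f‖ := by
  have := (Pind σ hK).le_opNorm f
  have h2 : ‖Pind σ hK‖ ≤ 1 := LinearMap.mkContinuous_norm_le _ zero_le_one _
  nlinarith [norm_nonneg f, norm_nonneg (Pind σ hK f)]

/-- The set of rotations carrying `x` into `K` has measure `σ K`. -/
lemma measure_rotset (hd : 2 ≤ d)
    (hσ2 : ∀ b : SOg d, MeasurePreserving (rot b) σ σ)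
    (μ : Measure (SOg d)) [IsProbabilityMeasure μ]
    (hμ : ∀ g : SOg d, MeasurePreserving (fun b => g * b) μ μ)
    (hKc : IsClosed K) (x : Sph d) :
    μ {b : SOg d | rot b⁻¹ x ∈ K} = σ K := by
  have hrotx : ∀ y : Sph d, Continuous fun b : SOg d => rot b⁻¹ y := by
    intro y
    have : Continuous fun b : SOg d => (b, y) := continuous_id.prodMk continuous_const
    exact continuous_rot_pair.comp this
  have hQm : ∀ y : Sph d, MeasurableSet {b : SOg d | rot b⁻¹ y ∈ K} :=
    fun y => (hKc.preimage (hrotx y)).measurableSet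
  -- constancy in the base point
  have hconst : ∀ y : Sph d,
      μ {b : SOg d | rot b⁻¹ y ∈ K} = μ {b : SOg d | rot b⁻¹ x ∈ K} := by
    intro y
    obtain ⟨g, hg⟩ := exists_rot_eq hd y x
    have hpre : (fun b => g * b) ⁻¹' {b : SOg d | rot b⁻¹ x ∈ K}
        = {b : SOg d | rot b⁻¹ y ∈ K} := by
      ext b
      simp only [Set.mem_preimage, Set.mem_setOf_eq, _root_.mul_inv_rev]
      have h4 : rot (b⁻¹ * g⁻¹) x = rot b⁻¹ y := by
        rw [rot_mul, ← hg, rot_inv_rot]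
      rw [h4]
    rw [← hpre, (hμ g).measure_preimage (hQm x).nullMeasurableSet]
  -- product set
  set Q : Set (SOg d × Sph d) := {p | rot p.1⁻¹ p.2 ∈ K} with hQ
  have hQmeas : MeasurableSet Q := (hKc.preimage continuous_rot_pair).measurableSet
  have h1 : (μ.prod σ) Q = σ K := by
    rw [Measure.prod_apply hQmeas]
    have : ∀ b : SOg d, σ (Prod.mk b ⁻¹' Q) = σ K := by
      intro b
      have : Prod.mk b ⁻¹' Q = rot b⁻¹ ⁻¹' K := rfl
      rw [this, (hσ2 b⁻¹).measure_preimage hKc.measurableSet.nullMeasurableSet]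
    simp only [this]
    simp
  have h2 : (μ.prod σ) Q = μ {b : SOg d | rot b⁻¹ x ∈ K} := by
    rw [Measure.prod_apply_symm hQmeas]
    have : ∀ y : Sph d, μ ((fun b => (b, y)) ⁻¹' Q) = μ {b : SOg d | rot b⁻¹ x ∈ K} := by
      intro y
      have he : (fun b => (b, y)) ⁻¹' Q = {b : SOg d | rot b⁻¹ y ∈ K} := rfl
      rw [he, hconst y]
    simp only [this]
    simp
  rw [← h2, h1]

/-- Rotation-invariant probability measures are positive on balls. -/
lemma sigma_ball_pos (hd : 2 ≤ d)
    (hσ2 : ∀ b : SOg d, MeasurePreserving (rot b) σ σ) (x₀ : Sph d) {ρ : ℝ} (hρ : 0 < ρ) :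
    0 < σ (Metric.ball x₀ ρ) := by
  rcases eq_zero_or_pos (σ (Metric.ball x₀ ρ)) with h0 | h
  · exfalso
    have hball : ∀ y : Sph d, σ (Metric.ball y ρ) = 0 := by
      intro y
      obtain ⟨g, hg⟩ := exists_rot_eq hd x₀ y
      have hpre : rot g⁻¹ ⁻¹' (Metric.ball x₀ ρ) = Metric.ball y ρ := by
        ext z
        simp only [Set.mem_preimage, Metric.mem_ball]
        constructor
        · intro hz
          have h3 := dist_rot g (rot g⁻¹ z) x₀
          rw [rot_rot_inv, hg] at h3
          rw [h3]; exact hz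
        · intro hz
          have h3 := dist_rot g (rot g⁻¹ z) x₀
          rw [rot_rot_inv, hg] at h3
          rw [← h3]; exact hz
      rw [← hpre, (hσ2 g⁻¹).measure_preimage
        measurableSet_ball.nullMeasurableSet, h0]
    obtain ⟨t, ht⟩ := IsCompact.elim_finite_subcover (isCompact_univ (X := Sph d))
      (fun y : Sph d => Metric.ball y ρ) (fun y => isOpen_ball)
      (fun z _ => Set.mem_iUnion.mpr ⟨z, Metric.mem_ball_self hρ⟩)
    have hle : σ (Set.univ : Set (Sph d)) ≤ ∑ y ∈ t, σ (Metric.ball y ρ) :=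
      le_trans (measure_mono ht) (measure_biUnion_finset_le t _)
    simp only [hball, Finset.sum_const_zero] at hle
    rw [measure_univ] at hle
    exact absurd hle (by norm_num)
  · exact h

end SphRot

open SphRot

theorem exists_projection_on_ball_bochner_average_identity_L2
    (d : ℕ) (hd : 2 ≤ d)
    (σ : Measure (Sph d)) [IsProbabilityMeasure σ]
    (hσ : ∀ b : SOg d, MeasurePreserving (rot b) σ σ)
    (μ : Measure (SOg d)) [IsProbabilityMeasure μ]
    (hμ : ∀ g : SOg d, MeasurePreserving (fun b => g * b) μ μ)
    (x₀ : Sph d) (r : ℝ) (hr : 0 < r) :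
    ∃ (P : Lp ℝ 2 σ →L[ℝ] Lp ℝ 2 σ) (c : ℝ),
      0 < c ∧
      -- `P` is an orthogonal projection
      (∀ f g : Lp ℝ 2 σ, ⟪P f, g⟫ = ⟪f, P g⟫) ∧
      (∀ f : Lp ℝ 2 σ, P (P f) = P f) ∧
      -- `P` is localized on the ball `B = ball x₀ r`
      (∃ K : Set (Sph d), IsCompact K ∧ K ⊆ Metric.ball x₀ r ∧
        (∀ f : Lp ℝ 2 σ, ∀ᵐ x ∂σ, x ∉ K → P f x = 0) ∧
        (∀ f : Lp ℝ 2 σ, (∀ᵐ x ∂σ, x ∈ K → f x = 0) → P f = 0)) ∧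
      -- continuity and value of the Bochner integral of the conjugated operators
      (∀ f : Lp ℝ 2 σ,
        Continuous (fun b : SOg d => TrotL2 σ hσ b (P (TrotL2 σ hσ b⁻¹ f))) ∧
        ∫ b : SOg d, TrotL2 σ hσ b (P (TrotL2 σ hσ b⁻¹ f)) ∂μ = c • f) := by

  classical
  obtain ⟨K, hKdef⟩ : ∃ K : Set (Sph d), K = Metric.closedBall x₀ (r / 2) := ⟨_, rfl⟩
  have hKclosed : IsClosed K := by rw [hKdef]; exact Metric.isClosed_closedBall
  have hKmeas : MeasurableSet K := hKclosed.measurableSet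
  have hKcpt : IsCompact K := hKclosed.isCompact
  have hKsub : K ⊆ Metric.ball x₀ r := by
    rw [hKdef]
    intro z hz
    rw [Metric.mem_closedBall] at hz
    rw [Metric.mem_ball]
    linarith
  have hσK : 0 < σ K := by
    refine lt_of_lt_of_le (sigma_ball_pos σ hd hσ x₀ (by positivity : 0 < r / 2)) ?_
    rw [hKdef]
    exact measure_mono Metric.ball_subset_closedBall
  obtain ⟨c, hc⟩ : ∃ c : ℝ, c = (σ K).toReal := ⟨_, rfl⟩
  have hcpos : 0 < c := by
    rw [hc]
    exact ENNReal.toReal_pos hσK.ne' (measure_ne_top σ K)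
  obtain ⟨P, hPdef⟩ : ∃ P : Lp ℝ 2 σ →L[ℝ] Lp ℝ 2 σ, P = Pind σ hKmeas := ⟨_, rfl⟩
  have hPcoe : ∀ f : Lp ℝ 2 σ, ⇑(P f) =ᵐ[σ] K.indicator ⇑f := by
    intro f
    rw [hPdef]
    exact coeFn_Pind σ hKmeas f
  have hQm : ∀ y : Sph d, MeasurableSet {b : SOg d | rot b⁻¹ y ∈ K} := by
    intro y
    have hcy : Continuous fun b : SOg d => rot b⁻¹ y := by
      have h : Continuous fun b : SOg d => (b, y) := continuous_id.prodMk continuous_const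
      exact continuous_rot_pair.comp h
    exact (hKclosed.preimage hcy).measurableSet
  refine ⟨P, c, hcpos, ?_, ?_, ⟨K, hKcpt, hKsub, ?_, ?_⟩, ?_⟩
  · -- self-adjoint
    intro f g
    rw [MeasureTheory.L2.inner_def, MeasureTheory.L2.inner_def]
    apply integral_congr_ae
    filter_upwards [hPcoe f, hPcoe g] with x h1 h2
    simp only [RCLike.inner_apply, conj_trivial]
    rw [h1, h2]
    by_cases hx : x ∈ K
    · rw [Set.indicator_of_mem hx, Set.indicator_of_mem hx]
    · rw [Set.indicator_of_notMem hx, Set.indicator_of_notMem hx, zero_mul, mul_zero]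
  · -- idempotent
    intro f
    apply MeasureTheory.Lp.ext
    refine (hPcoe (P f)).trans ?_
    refine (Filter.EventuallyEq.indicator (hPcoe f)).trans ?_
    rw [Set.indicator_indicator, Set.inter_self]
    exact (hPcoe f).symm
  · -- vanishes off K
    intro f
    filter_upwards [hPcoe f] with x h1 hx
    rw [h1, Set.indicator_of_notMem hx]
  · -- kills functions vanishing on K
    intro f hf
    apply MeasureTheory.Lp.ext
    refine (hPcoe f).trans ?_
    refine Filter.EventuallyEq.trans ?_ (Lp.coeFn_zero ℝ 2 σ).symm
    filter_upwards [hf] with x hx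
    by_cases hxK : x ∈ K
    · rw [Set.indicator_of_mem hxK, hx hxK]; rfl
    · rw [Set.indicator_of_notMem hxK]; rfl
  · -- continuity and integral identity
    intro f
    have hFcont : Continuous (fun b : SOg d => TrotL2 σ hσ b (P (TrotL2 σ hσ b⁻¹ f))) := by
      have c1 : Continuous fun b : SOg d => P (TrotL2 σ hσ b⁻¹ f) :=
        P.continuous.comp ((continuous_TrotL2_apply σ hσ f).comp continuous_inv_SOg)
      rw [continuous_iff_continuousAt]
      intro b₀
      unfold ContinuousAt
      rw [Metric.tendsto_nhds]
      intro ε hε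
      have e1 : ∀ᶠ b in nhds b₀,
          dist (P (TrotL2 σ hσ b⁻¹ f)) (P (TrotL2 σ hσ b₀⁻¹ f)) < ε/2 := by
        have h := c1.continuousAt (x := b₀)
        rw [ContinuousAt, Metric.tendsto_nhds] at h
        exact h _ (by positivity)
      have e2 : ∀ᶠ b in nhds b₀,
          dist (TrotL2 σ hσ b (P (TrotL2 σ hσ b₀⁻¹ f)))
            (TrotL2 σ hσ b₀ (P (TrotL2 σ hσ b₀⁻¹ f))) < ε/2 := by
        have h := (continuous_TrotL2_apply σ hσ (P (TrotL2 σ hσ b₀⁻¹ f))).continuousAt (x := b₀)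
        rw [ContinuousAt, Metric.tendsto_nhds] at h
        exact h _ (by positivity)
      filter_upwards [e1, e2] with b h1 h2
      calc dist (TrotL2 σ hσ b (P (TrotL2 σ hσ b⁻¹ f)))
            (TrotL2 σ hσ b₀ (P (TrotL2 σ hσ b₀⁻¹ f)))
          ≤ dist (TrotL2 σ hσ b (P (TrotL2 σ hσ b⁻¹ f)))
              (TrotL2 σ hσ b (P (TrotL2 σ hσ b₀⁻¹ f)))
            + dist (TrotL2 σ hσ b (P (TrotL2 σ hσ b₀⁻¹ f)))
              (TrotL2 σ hσ b₀ (P (TrotL2 σ hσ b₀⁻¹ f))) := dist_triangle _ _ _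
        _ < ε/2 + ε/2 := by
            rw [dist_TrotL2]
            exact add_lt_add h1 h2
        _ = ε := by ring
    refine ⟨hFcont, ?_⟩
    have hFcoe : ∀ b : SOg d,
        ⇑(TrotL2 σ hσ b (P (TrotL2 σ hσ b⁻¹ f)))
          =ᵐ[σ] fun x => Set.indicator K (fun _ => (1:ℝ)) (rot b⁻¹ x) * f x := by
      intro b
      have h1 : ⇑(TrotL2 σ hσ b⁻¹ f) =ᵐ[σ] ⇑f ∘ rot b⁻¹⁻¹ :=
        Lp.coeFn_compMeasurePreserving f (hσ b⁻¹⁻¹)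
      have h3 : ⇑(TrotL2 σ hσ b (P (TrotL2 σ hσ b⁻¹ f)))
          =ᵐ[σ] ⇑(P (TrotL2 σ hσ b⁻¹ f)) ∘ rot b⁻¹ :=
        Lp.coeFn_compMeasurePreserving (P (TrotL2 σ hσ b⁻¹ f)) (hσ b⁻¹)
      have h4 : ⇑(P (TrotL2 σ hσ b⁻¹ f)) ∘ rot b⁻¹
          =ᵐ[σ] (K.indicator ⇑(TrotL2 σ hσ b⁻¹ f)) ∘ rot b⁻¹ :=
        (hσ b⁻¹).quasiMeasurePreserving.ae_eq_comp (hPcoe (TrotL2 σ hσ b⁻¹ f))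
      have h5 : (K.indicator ⇑(TrotL2 σ hσ b⁻¹ f)) ∘ rot b⁻¹
          =ᵐ[σ] (K.indicator (⇑f ∘ rot b⁻¹⁻¹)) ∘ rot b⁻¹ :=
        (hσ b⁻¹).quasiMeasurePreserving.ae_eq_comp (Filter.EventuallyEq.indicator h1)
      refine ((h3.trans h4).trans h5).trans (Filter.Eventually.of_forall fun x => ?_)
      by_cases hx : rot b⁻¹ x ∈ K
      · simp only [Function.comp_apply, Set.indicator_of_mem hx]
        have hxx : rot b⁻¹⁻¹ (rot b⁻¹ x) = x := by
          rw [← rot_mul, inv_mul_cancel, rot_one]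
        rw [hxx, one_mul]
      · simp only [Function.comp_apply, Set.indicator_of_notMem hx, zero_mul]
    have hFint : Integrable (fun b : SOg d => TrotL2 σ hσ b (P (TrotL2 σ hσ b⁻¹ f))) μ := by
      refine Integrable.mono' (integrable_const ‖f‖) hFcont.aestronglyMeasurable ?_
      refine Filter.Eventually.of_forall fun b => ?_
      show ‖TrotL2 σ hσ b (P (TrotL2 σ hσ b⁻¹ f))‖ ≤ ‖f‖
      have h1 : ‖TrotL2 σ hσ b (P (TrotL2 σ hσ b⁻¹ f))‖
          = ‖P (TrotL2 σ hσ b⁻¹ f)‖ := norm_TrotL2 σ hσ _ _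
      have h2 : ‖P (TrotL2 σ hσ b⁻¹ f)‖ ≤ ‖TrotL2 σ hσ b⁻¹ f‖ := by
        rw [hPdef]
        exact norm_Pind_le σ hKmeas _
      have h3 : ‖TrotL2 σ hσ b⁻¹ f‖ = ‖f‖ := norm_TrotL2 σ hσ _ _
      rw [h1, ← h3]
      exact h2
    apply ext_inner_left ℝ
    intro v
    have hswap0 : ⟪v, ∫ b, TrotL2 σ hσ b (P (TrotL2 σ hσ b⁻¹ f)) ∂μ⟫
        = ∫ b, ⟪v, TrotL2 σ hσ b (P (TrotL2 σ hσ b⁻¹ f))⟫ ∂μ := by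
      have h := ContinuousLinearMap.integral_comp_comm (innerSL ℝ v) hFint
      simp only [innerSL_apply_apply] at h
      exact h.symm
    obtain ⟨H, hHdef⟩ : ∃ H : SOg d → Sph d → ℝ,
        H = fun b x => Set.indicator K (fun _ => (1:ℝ)) (rot b⁻¹ x) * (v x * f x) := ⟨_, rfl⟩
    have hinner : ∀ b, ⟪v, TrotL2 σ hσ b (P (TrotL2 σ hσ b⁻¹ f))⟫ = ∫ x, H b x ∂σ := by
      intro b
      rw [MeasureTheory.L2.inner_def]
      apply integral_congr_ae
      filter_upwards [hFcoe b] with x hx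
      simp only [RCLike.inner_apply, conj_trivial, hHdef]
      rw [hx]
      ring
    have hvf : AEStronglyMeasurable (fun x : Sph d => v x * f x) σ :=
      (Lp.aestronglyMeasurable v).mul (Lp.aestronglyMeasurable f)
    have hsnd : MeasurePreserving (Prod.snd : SOg d × Sph d → Sph d) (μ.prod σ) σ :=
      ⟨measurable_snd, by rw [Measure.map_snd_prod, measure_univ, one_smul]⟩
    have hvf_int : Integrable (fun x : Sph d => v x * f x) σ := by
      have h := MeasureTheory.L2.integrable_inner (𝕜 := ℝ) v f
      simpa [RCLike.inner_apply, conj_trivial, mul_comm] using h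
    have hg0 : Integrable (fun p : SOg d × Sph d => v p.2 * f p.2) (μ.prod σ) :=
      (hsnd.integrable_comp hvf).mpr hvf_int
    have hQc : IsClosed {p : SOg d × Sph d | rot p.1⁻¹ p.2 ∈ K} :=
      hKclosed.preimage continuous_rot_pair
    have m1 : StronglyMeasurable
        (fun p : SOg d × Sph d => Set.indicator K (fun _ => (1:ℝ)) (rot p.1⁻¹ p.2)) := by
      have heq : (fun p : SOg d × Sph d => Set.indicator K (fun _ => (1:ℝ)) (rot p.1⁻¹ p.2))
          = Set.indicator {p : SOg d × Sph d | rot p.1⁻¹ p.2 ∈ K} (fun _ => (1:ℝ)) := by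
        funext p
        by_cases hp : rot p.1⁻¹ p.2 ∈ K
        · rw [Set.indicator_of_mem hp, Set.indicator_of_mem (by exact hp)]
        · rw [Set.indicator_of_notMem hp, Set.indicator_of_notMem (by exact hp)]
      rw [heq]
      exact stronglyMeasurable_const.indicator hQc.measurableSet
    have hint : Integrable (Function.uncurry H) (μ.prod σ) := by
      rw [hHdef]
      refine Integrable.mono hg0 (m1.aestronglyMeasurable.mul
        (hvf.comp_quasiMeasurePreserving hsnd.quasiMeasurePreserving)) ?_
      refine Filter.Eventually.of_forall fun p => ?_
      show ‖Set.indicator K (fun _ => (1:ℝ)) (rot p.1⁻¹ p.2) * (v p.2 * f p.2)‖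
        ≤ ‖v p.2 * f p.2‖
      by_cases hp : rot p.1⁻¹ p.2 ∈ K
      · rw [Set.indicator_of_mem hp, one_mul]
      · rw [Set.indicator_of_notMem hp, zero_mul, norm_zero]
        exact norm_nonneg _
    have hin : ∀ x : Sph d, ∫ b, H b x ∂μ = c * (v x * f x) := by
      intro x
      have heq : (fun b => H b x)
          = Set.indicator {b : SOg d | rot b⁻¹ x ∈ K} (fun _ => v x * f x) := by
        funext b
        simp only [hHdef]
        by_cases hb : rot b⁻¹ x ∈ K
        · rw [Set.indicator_of_mem hb, Set.indicator_of_mem (by exact hb), one_mul]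
        · rw [Set.indicator_of_notMem hb, Set.indicator_of_notMem (by exact hb), zero_mul]
      rw [heq, integral_indicator_const _ (hQm x), measureReal_def,
        measure_rotset σ hd hσ μ hμ hKclosed x, smul_eq_mul, hc]
    calc ⟪v, ∫ b, TrotL2 σ hσ b (P (TrotL2 σ hσ b⁻¹ f)) ∂μ⟫
        = ∫ b, ⟪v, TrotL2 σ hσ b (P (TrotL2 σ hσ b⁻¹ f))⟫ ∂μ := hswap0
      _ = ∫ b, ∫ x, H b x ∂σ ∂μ := by
          apply integral_congr_ae
          exact Filter.Eventually.of_forall hinner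
      _ = ∫ x, ∫ b, H b x ∂μ ∂σ := integral_integral_swap hint
      _ = ∫ x, c * (v x * f x) ∂σ := by
          apply integral_congr_ae
          exact Filter.Eventually.of_forall hin
      _ = c * ∫ x, v x * f x ∂σ := integral_const_mul c _
      _ = ⟪v, c • f⟫ := by
          rw [real_inner_smul_right, MeasureTheory.L2.inner_def]
          have heq2 : ∫ x, v x * f x ∂σ = ∫ x, (inner ℝ (v x) (f x) : ℝ) ∂σ := by
            apply integral_congr_ae
            refine Filter.Eventually.of_forall fun x => ?_
            simp [RCLike.inner_apply, conj_trivial, mul_comm]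
          rw [heq2]


end
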